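/- Let ψ : [0,t_f] → ℝ^n be continuous with |ψ(t)| ≤ C₀ for all t, let M > 0, and for ε ∈ (0,1] let y : [0,t_f] → ℝ^n be the C² solution of ε·y''(t) = −A(t)·y(t) + ε·ψ(t) with y(0) = 0 and |y'(0)| ≤ M. Then there exists C > 0 depending only on n, c, C₀, t_f, M (and not on ε) such that for all t ∈ [0,t_f]: |y(t)| ≤ C·ε^{1/2} and |y'(t)| ≤ C. -/

import Mathlib

/- O(√ε) bound for the inhomogeneous singularly perturbed system
ε·y'' = −A(t)·y + ε·ψ(t) with compatible initial data. -/

open scoped RealInnerProductSpace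
open Set

noncomputable section

attribute [local instance] Matrix.normedAddCommGroup Matrix.normedSpace

def matCLM (n : ℕ) : Matrix (Fin n) (Fin n) ℝ →L[ℝ]
    (EuclideanSpace ℝ (Fin n) →L[ℝ] EuclideanSpace ℝ (Fin n)) :=
  LinearMap.toContinuousLinearMap
  { toFun := fun M => Matrix.toEuclideanCLM (𝕜 := ℝ) M,
    map_add' := fun M N => by simp,
    map_smul' := fun r M => by simp }

lemma matCLM_apply (n : ℕ) (M : Matrix (Fin n) (Fin n) ℝ) :
    matCLM n M = Matrix.toEuclideanCLM (𝕜 := ℝ) M := rfl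

lemma clm_eq_lin (n : ℕ) (M : Matrix (Fin n) (Fin n) ℝ) (v : EuclideanSpace ℝ (Fin n)) :
    Matrix.toEuclideanCLM (𝕜 := ℝ) M v = Matrix.toEuclideanLin M v := by
  rw [← Matrix.coe_toEuclideanCLM_eq_toEuclideanLin]; rfl


set_option maxHeartbeats 1000000 in
theorem inhomogeneous_residual_bound
    (n : ℕ) (hn : 1 ≤ n)
    (tf : ℝ) (htf : 0 < tf)
    (c C₀ : ℝ) (hc : 0 < c) (hC₀ : 0 < C₀)
    (M : ℝ) (hM : 0 < M) :
    -- the constant C depends only on n, c, C₀, t_f, M (and not on ε)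
    ∃ C > 0, ∀ A : ℝ → Matrix (Fin n) (Fin n) ℝ,
      ContDiff ℝ 1 A →
      (∀ t ∈ Icc (0:ℝ) tf, (A t).IsSymm) →
      (∀ t ∈ Icc (0:ℝ) tf, ∀ v : EuclideanSpace ℝ (Fin n),
        c * ‖v‖ ^ 2 ≤ ⟪v, (Matrix.toEuclideanLin (A t)) v⟫) →
      (∀ t ∈ Icc (0:ℝ) tf,
        ‖Matrix.toEuclideanCLM (𝕜 := ℝ) (A t)‖
          + ‖Matrix.toEuclideanCLM (𝕜 := ℝ) (deriv A t)‖ ≤ C₀) →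
      -- ψ is continuous and bounded by C₀
      ∀ ψ : ℝ → EuclideanSpace ℝ (Fin n),
      ContinuousOn ψ (Icc (0:ℝ) tf) →
      (∀ t ∈ Icc (0:ℝ) tf, ‖ψ t‖ ≤ C₀) →
      ∀ ε ∈ Ioc (0:ℝ) 1, ∀ y : ℝ → EuclideanSpace ℝ (Fin n),
      -- y is the C² solution of ε·y'' = −A(t)·y + ε·ψ with y(0)=0, |y'(0)| ≤ M
      ContDiff ℝ 2 y →
      (∀ t ∈ Icc (0:ℝ) tf,
        ε • deriv (deriv y) t
          = -(Matrix.toEuclideanLin (A t)) (y t) + ε • ψ t) →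
      y 0 = 0 → ‖deriv y 0‖ ≤ M →
      ∀ t ∈ Icc (0:ℝ) tf,
        ‖y t‖ ≤ C * Real.sqrt ε ∧ ‖deriv y t‖ ≤ C := by
  set K : ℝ := 1 + C₀ / c with hKdef
  have hKpos : 0 < K := by positivity
  have hK1 : 1 ≤ K := le_add_of_nonneg_right (by positivity)
  set Bd : ℝ := (M ^ 2 + C₀ ^ 2) * Real.exp (K * tf) with hBddef
  have hBdpos : 0 < Bd := by positivity
  set m : ℝ := min c 1 with hmdef
  have hm : 0 < m := lt_min hc one_pos
  refine ⟨Real.sqrt (Bd / m), Real.sqrt_pos.mpr (by positivity), ?_⟩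
  intro A hA hAsym hAcoer hAbd ψ hψc hψb ε hε y hy hode hy0 hy'0
  obtain ⟨hε0, hε1⟩ := hε
  -- derivatives
  have hAd : ∀ t, HasDerivAt A (deriv A t) t := fun t =>
    ((hA.differentiable one_ne_zero) t).hasDerivAt
  have hBder : ∀ t, HasDerivAt (fun s => Matrix.toEuclideanCLM (𝕜 := ℝ) (A s))
      (matCLM n (deriv A t)) t := fun t => by
    exact (matCLM n).hasFDerivAt.comp_hasDerivAt t (hAd t)
  have hy1 : Differentiable ℝ y := hy.differentiable (by norm_num)
  have hy2 : ContDiff ℝ 1 (deriv y) := by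
    have := (contDiff_succ_iff_deriv (n := 1)).mp (by exact_mod_cast hy)
    exact this.2.2
  have hy3 : Differentiable ℝ (deriv y) := hy2.differentiable one_ne_zero
  have hyd : ∀ t, HasDerivAt y (deriv y t) t := fun t => (hy1 t).hasDerivAt
  have hy'd : ∀ t, HasDerivAt (deriv y) (deriv (deriv y) t) t := fun t => (hy3 t).hasDerivAt
  -- the energy
  set En : ℝ → ℝ := fun t => ε * ⟪deriv y t, deriv y t⟫
    + ⟪y t, Matrix.toEuclideanCLM (𝕜 := ℝ) (A t) (y t)⟫ with hEndef
  have hEraw : ∀ t, HasDerivAt En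
      (ε * (⟪deriv y t, deriv (deriv y) t⟫ + ⟪deriv (deriv y) t, deriv y t⟫)
        + (⟪y t, (matCLM n (deriv A t)) (y t)
              + (Matrix.toEuclideanCLM (𝕜 := ℝ) (A t)) (deriv y t)⟫
            + ⟪deriv y t, Matrix.toEuclideanCLM (𝕜 := ℝ) (A t) (y t)⟫)) t := by
    intro t
    exact ((HasDerivAt.inner ℝ (hy'd t) (hy'd t)).const_mul ε).add
      (HasDerivAt.inner ℝ (hyd t) ((hBder t).clm_apply (hyd t)))
  set En' : ℝ → ℝ := fun t => 2 * ε * ⟪ψ t, deriv y t⟫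
    + ⟪y t, (matCLM n (deriv A t)) (y t)⟫ with hEn'def
  -- on Icc the raw derivative equals En'
  have heq : ∀ t ∈ Icc (0:ℝ) tf, HasDerivAt En (En' t) t := by
    intro t ht
    have herm : (A t).IsHermitian := by
      rw [Matrix.IsHermitian, Matrix.conjTranspose_eq_transpose_of_trivial]
      exact hAsym t ht
    have hsym := Matrix.isHermitian_iff_isSymmetric.mp herm
    have hode' := hode t ht
    have e1 : ε * ⟪deriv (deriv y) t, deriv y t⟫
        = -⟪Matrix.toEuclideanLin (A t) (y t), deriv y t⟫ + ε * ⟪ψ t, deriv y t⟫ := by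
      rw [← real_inner_smul_left, hode', inner_add_left, inner_neg_left, real_inner_smul_left]
    have e2 : ε * ⟪deriv y t, deriv (deriv y) t⟫
        = -⟪deriv y t, Matrix.toEuclideanLin (A t) (y t)⟫ + ε * ⟪deriv y t, ψ t⟫ := by
      rw [← real_inner_smul_right, hode', inner_add_right, inner_neg_right, real_inner_smul_right]
    have c1 : ⟪deriv y t, ψ t⟫ = ⟪ψ t, deriv y t⟫ := real_inner_comm _ _
    have c2 : ⟪Matrix.toEuclideanLin (A t) (y t), deriv y t⟫
        = ⟪deriv y t, Matrix.toEuclideanLin (A t) (y t)⟫ := real_inner_comm _ _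
    have s2 : ⟪y t, Matrix.toEuclideanCLM (𝕜 := ℝ) (A t) (deriv y t)⟫
        = ⟪Matrix.toEuclideanLin (A t) (y t), deriv y t⟫ := by
      rw [clm_eq_lin, ← hsym]
    have s3 : ⟪deriv y t, Matrix.toEuclideanCLM (𝕜 := ℝ) (A t) (y t)⟫
        = ⟪deriv y t, Matrix.toEuclideanLin (A t) (y t)⟫ := by rw [clm_eq_lin]
    have := hEraw t
    convert this using 1
    simp only [hEn'def, inner_add_right, s2, s3, mul_add, e1, e2, c1, c2]
    ring
  -- nonnegativity and basic bounds
  have hQc : ∀ t ∈ Icc (0:ℝ) tf,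
      c * ‖y t‖ ^ 2 ≤ ⟪y t, Matrix.toEuclideanCLM (𝕜 := ℝ) (A t) (y t)⟫ := by
    intro t ht; rw [clm_eq_lin]; exact hAcoer t ht (y t)
  have hPn : ∀ t, (0:ℝ) ≤ ε * ⟪deriv y t, deriv y t⟫ := fun t =>
    mul_nonneg hε0.le real_inner_self_nonneg
  have hQn : ∀ t ∈ Icc (0:ℝ) tf,
      (0:ℝ) ≤ ⟪y t, Matrix.toEuclideanCLM (𝕜 := ℝ) (A t) (y t)⟫ := fun t ht =>
    le_trans (by positivity) (hQc t ht)
  have hEnn : ∀ t ∈ Icc (0:ℝ) tf, 0 ≤ En t := fun t ht => add_nonneg (hPn t) (hQn t ht)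
  -- bound on the derivative
  have hbound : ∀ t ∈ Ico (0:ℝ) tf, ‖En' t‖ ≤ K * ‖En t‖ + ε * C₀ ^ 2 := by
    intro t ht
    have ht' : t ∈ Icc (0:ℝ) tf := Ico_subset_Icc_self ht
    have hnB' : ‖Matrix.toEuclideanCLM (𝕜 := ℝ) (deriv A t)‖ ≤ C₀ :=
      le_trans (le_add_of_nonneg_left (norm_nonneg _)) (hAbd t ht')
    have a1 : |⟪ψ t, deriv y t⟫| ≤ C₀ * ‖deriv y t‖ := by
      refine le_trans (abs_real_inner_le_norm _ _) ?_
      exact mul_le_mul_of_nonneg_right (hψb t ht') (norm_nonneg _)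
    have a2 : |⟪y t, (matCLM n (deriv A t)) (y t)⟫| ≤ C₀ * ‖y t‖ ^ 2 := by
      refine le_trans (abs_real_inner_le_norm _ _) ?_
      have := ((matCLM n (deriv A t))).le_opNorm (y t)
      rw [matCLM_apply] at this ⊢
      calc ‖y t‖ * ‖Matrix.toEuclideanCLM (𝕜 := ℝ) (deriv A t) (y t)‖
          ≤ ‖y t‖ * (C₀ * ‖y t‖) := by
            refine mul_le_mul_of_nonneg_left (le_trans this ?_) (norm_nonneg _)
            exact mul_le_mul_of_nonneg_right hnB' (norm_nonneg _)
        _ = C₀ * ‖y t‖ ^ 2 := by ring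
    have habs1 : |2 * ε * ⟪ψ t, deriv y t⟫| ≤ 2 * ε * (C₀ * ‖deriv y t‖) := by
      rw [abs_mul, abs_of_nonneg (show (0:ℝ) ≤ 2 * ε by positivity)]
      exact mul_le_mul_of_nonneg_left a1 (by positivity)
    have hEabs : ‖En' t‖ ≤ 2 * ε * (C₀ * ‖deriv y t‖) + C₀ * ‖y t‖ ^ 2 := by
      simp only [hEn'def, Real.norm_eq_abs]
      exact le_trans (abs_add_le _ _) (add_le_add habs1 a2)
    have hnorm2 : ⟪deriv y t, deriv y t⟫ = ‖deriv y t‖ ^ 2 := real_inner_self_eq_norm_sq _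
    have amgm : 2 * ε * (C₀ * ‖deriv y t‖) ≤ ε * ‖deriv y t‖ ^ 2 + ε * C₀ ^ 2 := by
      nlinarith [sq_nonneg (‖deriv y t‖ - C₀), hε0.le]
    have hcoer := hQc t ht'
    have hdc : (0:ℝ) ≤ C₀ / c := by positivity
    have hyy : C₀ * ‖y t‖ ^ 2
        ≤ (C₀ / c) * ⟪y t, Matrix.toEuclideanCLM (𝕜 := ℝ) (A t) (y t)⟫ := by
      have := mul_le_mul_of_nonneg_left hcoer hdc
      calc C₀ * ‖y t‖ ^ 2 = (C₀ / c) * (c * ‖y t‖ ^ 2) := by field_simp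
        _ ≤ _ := this
    have hEntval : ‖En t‖ = ε * ⟪deriv y t, deriv y t⟫
        + ⟪y t, Matrix.toEuclideanCLM (𝕜 := ℝ) (A t) (y t)⟫ := by
      rw [Real.norm_of_nonneg (hEnn t ht')]
    have hP := hPn t
    have hQ := hQn t ht'
    calc ‖En' t‖ ≤ 2 * ε * (C₀ * ‖deriv y t‖) + C₀ * ‖y t‖ ^ 2 := hEabs
      _ ≤ (ε * ‖deriv y t‖ ^ 2 + ε * C₀ ^ 2)
          + (C₀ / c) * ⟪y t, Matrix.toEuclideanCLM (𝕜 := ℝ) (A t) (y t)⟫ :=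
            add_le_add amgm hyy
      _ ≤ K * ‖En t‖ + ε * C₀ ^ 2 := by
        rw [hEntval, hKdef, ← hnorm2]
        nlinarith [mul_nonneg hdc hP, mul_nonneg hdc hQ]
  -- Gronwall
  have hcont : ContinuousOn En (Icc (0:ℝ) tf) := fun t _ =>
    ((hEraw t).differentiableAt.continuousAt).continuousWithinAt
  have hinit : ‖En 0‖ ≤ ε * M ^ 2 := by
    have h0 : En 0 = ε * ⟪deriv y 0, deriv y 0⟫ := by
      rw [hEndef]; simp [hy0]
    rw [Real.norm_of_nonneg (by rw [h0]; exact hPn 0), h0, real_inner_self_eq_norm_sq]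
    have : ‖deriv y 0‖ ^ 2 ≤ M ^ 2 := by nlinarith [norm_nonneg (deriv y 0)]
    exact mul_le_mul_of_nonneg_left this hε0.le
  have key := norm_le_gronwallBound_of_norm_deriv_right_le hcont
    (fun t ht => (heq t (Ico_subset_Icc_self ht)).hasDerivWithinAt) hinit hbound
  have hgb : ∀ t ∈ Icc (0:ℝ) tf,
      gronwallBound (ε * M ^ 2) K (ε * C₀ ^ 2) (t - 0) ≤ ε * Bd := by
    intro t ht
    rw [gronwallBound_of_K_ne_0 hKpos.ne', hBddef]
    simp only [sub_zero]
    have h1 : Real.exp (K * t) ≤ Real.exp (K * tf) :=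
      Real.exp_le_exp.mpr (mul_le_mul_of_nonneg_left ht.2 hKpos.le)
    have h2 : (1:ℝ) ≤ Real.exp (K * t) :=
      Real.one_le_exp (mul_nonneg hKpos.le ht.1)
    have h3 : ε * C₀ ^ 2 / K ≤ ε * C₀ ^ 2 := div_le_self (by positivity) hK1
    have h4 : (0:ℝ) < Real.exp (K * tf) := Real.exp_pos _
    have h5 : ε * M ^ 2 * Real.exp (K * t) ≤ ε * M ^ 2 * Real.exp (K * tf) :=
      mul_le_mul_of_nonneg_left h1 (by positivity)
    have h6 : ε * C₀ ^ 2 / K * (Real.exp (K * t) - 1)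
        ≤ ε * C₀ ^ 2 * Real.exp (K * tf) := by
      calc ε * C₀ ^ 2 / K * (Real.exp (K * t) - 1)
          ≤ ε * C₀ ^ 2 * (Real.exp (K * t) - 1) :=
            mul_le_mul_of_nonneg_right h3 (by linarith)
        _ ≤ ε * C₀ ^ 2 * Real.exp (K * tf) :=
            mul_le_mul_of_nonneg_left (by linarith) (by positivity)
    nlinarith
  have hEb : ∀ t ∈ Icc (0:ℝ) tf, En t ≤ ε * Bd := fun t ht =>
    le_trans (le_trans (le_abs_self _) (key t ht)) (hgb t ht)
  -- conclude
  intro t ht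
  have hEt := hEb t ht
  have hP := hPn t
  have hQ := hQn t ht
  have hcoer := hQc t ht
  have hEsplit : En t = ε * ⟪deriv y t, deriv y t⟫
      + ⟪y t, Matrix.toEuclideanCLM (𝕜 := ℝ) (A t) (y t)⟫ := rfl
  constructor
  · -- ‖y t‖ ≤ C √ε
    have h1 : c * ‖y t‖ ^ 2 ≤ ε * Bd := by
      refine le_trans hcoer (le_trans ?_ hEt)
      rw [hEsplit]; linarith
    have h2 : ‖y t‖ ^ 2 ≤ ε * (Bd / m) := by
      have hmc : m ≤ c := min_le_left _ _
      have : ‖y t‖ ^ 2 ≤ ε * Bd / c := by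
        rw [le_div_iff₀ hc]; linarith [h1]
      refine le_trans this ?_
      rw [mul_div_assoc]
      exact mul_le_mul_of_nonneg_left
        (div_le_div_of_nonneg_left hBdpos.le hm hmc) hε0.le
    calc ‖y t‖ = Real.sqrt (‖y t‖ ^ 2) := (Real.sqrt_sq (norm_nonneg _)).symm
      _ ≤ Real.sqrt (ε * (Bd / m)) := Real.sqrt_le_sqrt h2
      _ = Real.sqrt ε * Real.sqrt (Bd / m) := Real.sqrt_mul hε0.le _
      _ = Real.sqrt (Bd / m) * Real.sqrt ε := mul_comm _ _
  · -- ‖y' t‖ ≤ C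
    have hnorm2 : ⟪deriv y t, deriv y t⟫ = ‖deriv y t‖ ^ 2 := real_inner_self_eq_norm_sq _
    have h1 : ε * ‖deriv y t‖ ^ 2 ≤ ε * Bd := by
      rw [← hnorm2]
      refine le_trans ?_ hEt
      rw [hEsplit]; linarith
    have h2 : ‖deriv y t‖ ^ 2 ≤ Bd := le_of_mul_le_mul_left (by linarith) hε0
    have h3 : ‖deriv y t‖ ^ 2 ≤ Bd / m := by
      refine le_trans h2 ?_
      have := div_le_div_of_nonneg_left hBdpos.le hm (min_le_right c 1)
      rwa [div_one] at this
    calc ‖deriv y t‖ = Real.sqrt (‖deriv y t‖ ^ 2) := (Real.sqrt_sq (norm_nonneg _)).symm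
      _ ≤ Real.sqrt (Bd / m) := Real.sqrt_le_sqrt h3

end
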